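/- Let V(x) = Ṽ(|x|) + c·∑_{i=2}^n x_i² on ℝⁿ, where c ≥ 0 and Ṽ : ℝ → ℝ is even, C¹, with Ṽ' convex and nonnegative-third-derivative on (0,∞) (so that Ṽ'(b) − Ṽ'(a) ≥ 2Ṽ'((b−a)/2) for a < b). Then Ṽ' is a modulus of convexity for V: for all x ≠ y in ℝⁿ, (∇V(y) − ∇V(x)) · (y−x)/|y−x| ≥ 2Ṽ'(|y−x|/2). -/

import Mathlib

open Set Filter Asymptotics Topology



lemma my_slope_mono (f : ℝ → ℝ) (hconv : ConvexOn ℝ (Set.Ici (0:ℝ)) f) (hf0 : f 0 = 0)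
    {s t : ℝ} (hs : 0 < s) (hst : s ≤ t) : f s / s ≤ f t / t := by
  have ht : 0 < t := hs.trans_le hst
  have h := hconv.2 (mem_Ici.mpr (le_refl (0:ℝ))) (mem_Ici.mpr ht.le)
    (show (0:ℝ) ≤ 1 - s/t by rw [sub_nonneg]; exact div_le_one_of_le₀ hst ht.le)
    (show (0:ℝ) ≤ s/t by positivity)
    (show (1 - s/t) + s/t = 1 by ring)
  simp only [smul_eq_mul, mul_zero, zero_add, hf0] at h
  rw [div_mul_cancel₀ _ ht.ne'] at h
  rw [div_le_div_iff₀ hs ht]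
  have h2 := mul_le_mul_of_nonneg_right h ht.le
  calc f s * t ≤ s / t * f t * t := h2
    _ = f t * s := by field_simp


lemma my_scalar_key (f : ℝ → ℝ) (hf0 : f 0 = 0) (hodd : ∀ x, f (-x) = - f x)
    (hslope : ∀ s t : ℝ, 0 < s → s ≤ t → f s / s ≤ f t / t)
    (hmod : ∀ a b : ℝ, a < b → f b - f a ≥ 2 * f ((b - a) / 2))
    (a b s r : ℝ) (ha : 0 ≤ a) (hb : 0 ≤ b) (hr : 0 < r)
    (hsa : |s| ≤ a) (hrel : b^2 = a^2 + 2*r*s + r^2) :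
    2 * f (r/2) ≤ (f b / b) * (s + r) - (f a / a) * s := by
  have hfr : 2 * f (r/2) ≤ f r := by
    have h := hmod 0 r hr
    rw [hf0, show (r - 0)/2 = r/2 by ring] at h
    linarith
  have habs := abs_le.mp hsa
  have hsrb : |s + r| ≤ b := by
    have h1 : (s+r)^2 ≤ b^2 := by nlinarith
    have h2 : |s + r| ≤ |b| := by
      rw [← Real.sqrt_sq_eq_abs, ← Real.sqrt_sq_eq_abs]
      exact Real.sqrt_le_sqrt h1
    rwa [abs_of_nonneg hb] at h2
  have hsrb' := abs_le.mp hsrb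
  rcases le_or_gt 0 s with hs | hs
  · -- s ≥ 0
    have hbr : r ≤ b := by nlinarith
    have hb0 : 0 < b := hr.trans_le hbr
    have h1 : f r / r ≤ f b / b := hslope r b hr hbr
    have h2 : f r ≤ r * (f b / b) := by
      have h3 := mul_le_mul_of_nonneg_left h1 hr.le
      rwa [mul_div_cancel₀ _ hr.ne'] at h3
    rcases eq_or_lt_of_le hs with hs0 | hs0
    · rw [← hs0]
      have heq : (f b / b) * (0 + r) - (f a / a) * 0 = r * (f b / b) := by ring
      rw [heq]
      linarith
    · have ha0 : 0 < a := lt_of_lt_of_le hs0 (le_trans (le_abs_self s) hsa)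
      have hab : a ≤ b := by nlinarith
      have h3 : f a / a ≤ f b / b := hslope a b ha0 hab
      nlinarith [mul_le_mul_of_nonneg_left h3 hs0.le]
  · rcases le_or_gt (s + r) 0 with hsr | hsr
    · -- s + r ≤ 0
      have hvr : r ≤ -s := by linarith
      have hva : -s ≤ a := by linarith
      have ha0 : 0 < a := lt_of_lt_of_le (by linarith) hva
      have h1 : f r / r ≤ f a / a := hslope r a hr (hvr.trans hva)
      have h2 : f r ≤ r * (f a / a) := by
        have h3 := mul_le_mul_of_nonneg_left h1 hr.le
        rwa [mul_div_cancel₀ _ hr.ne'] at h3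
      rcases eq_or_lt_of_le hb with hb0 | hb0
      · have hsr0 : s + r = 0 := by
          have : |s + r| ≤ 0 := by rw [hb0]; exact hsrb
          have := abs_nonpos_iff.mp this
          linarith [this]
        have hfb : f b / b = 0 := by rw [← hb0]; simp
        rw [hfb]
        have hsval : s = -r := by linarith
        rw [hsval]
        have heq : (0:ℝ) * (-r + r) - (f a / a) * (-r) = r * (f a / a) := by ring
        rw [heq]
        linarith
      · have hba : b ≤ a := by nlinarith
        have h3 : f b / b ≤ f a / a := hslope b a hb0 hba
        nlinarith [mul_le_mul_of_nonneg_left h3 (by linarith : (0:ℝ) ≤ -(s+r))]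
    · -- s < 0 < s + r
      have ha0 : 0 < a := lt_of_lt_of_le (by simpa using abs_pos.mpr (by linarith : s ≠ 0)) hsa
      have hsb : s + r ≤ b := hsrb'.2
      have h1 : f (s+r) / (s+r) ≤ f b / b := hslope (s+r) b hsr hsb
      have h2 : f (s+r) ≤ (s+r) * (f b / b) := by
        have h3 := mul_le_mul_of_nonneg_left h1 hsr.le
        rwa [mul_div_cancel₀ _ hsr.ne'] at h3
      have hva : -s ≤ a := by linarith
      have h3 : f (-s) / (-s) ≤ f a / a := hslope (-s) a (by linarith) hva
      have h4 : f (-s) ≤ (-s) * (f a / a) := by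
        have h5 := mul_le_mul_of_nonneg_left h3 (by linarith : (0:ℝ) ≤ -s)
        rwa [mul_div_cancel₀ _ (by linarith : (-s) ≠ 0)] at h5
      have h5 : f (-s) = - f s := hodd s
      have h6 := hmod s (s+r) (by linarith)
      rw [show ((s+r) - s)/2 = r/2 by ring] at h6
      nlinarith


lemma my_hasFDerivAt_norm {F : Type*} [NormedAddCommGroup F] [InnerProductSpace ℝ F]
    (Vt : ℝ → ℝ) (hC1 : ContDiff ℝ 1 Vt) (h0 : deriv Vt 0 = 0) (z : F) :
    HasFDerivAt (fun w : F => Vt ‖w‖) ((deriv Vt ‖z‖ * ‖z‖⁻¹) • innerSL ℝ z) z := by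
  have hd : ∀ t, HasDerivAt Vt (deriv Vt t) t := fun t =>
    (hC1.differentiable one_ne_zero t).hasDerivAt
  rcases eq_or_ne z 0 with rfl | hz
  · have hzero : ((deriv Vt ‖(0:F)‖ * ‖(0:F)‖⁻¹) • innerSL ℝ (0:F)) = 0 := by
      simp
    rw [hzero, hasFDerivAt_iff_isLittleO_nhds_zero]
    have h1 : (fun t : ℝ => Vt t - Vt 0) =o[𝓝 0] fun t => t := by
      have h2 := (hd 0).hasFDerivAt
      rw [h0] at h2
      have h3 := h2.isLittleO
      simpa using h3
    have h2 : Tendsto (fun w : F => ‖w‖) (𝓝 0) (𝓝 0) := by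
      simpa using continuous_norm.tendsto (0:F)
    have h3 := h1.comp_tendsto h2
    have h4 : (fun w : F => ‖w‖) =O[𝓝 0] fun w => w :=
      (Asymptotics.isBigO_refl (fun w : F => w) (𝓝 0)).norm_left
    have h5 := h3.trans_isBigO h4
    simpa [Function.comp_def] using h5
  · have hzn : (0:ℝ) < ‖z‖ := norm_pos_iff.mpr hz
    have hn : HasFDerivAt (fun w : F => ‖w‖) (‖z‖⁻¹ • innerSL ℝ z) z := by
      have h1 : HasFDerivAt (fun w : F => ‖w‖^2) (2 • innerSL ℝ z) z :=
        (hasStrictFDerivAt_norm_sq z).hasFDerivAt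
      have h2 : HasDerivAt Real.sqrt (1 / (2 * Real.sqrt (‖z‖^2))) (‖z‖^2) :=
        Real.hasDerivAt_sqrt (by positivity)
      have h3 := h2.comp_hasFDerivAt z h1
      rw [show Real.sqrt ∘ (fun w : F => ‖w‖^2) = fun w : F => ‖w‖ from by
        funext w; simp [Real.sqrt_sq (norm_nonneg w)]] at h3
      refine h3.congr_fderiv ?_
      rw [Real.sqrt_sq (norm_nonneg z)]
      ext v
      simp only [ContinuousLinearMap.coe_smul', Pi.smul_apply, smul_eq_mul]
      field_simp
      ring
    have h5 := (hd ‖z‖).comp_hasFDerivAt z hn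
    refine h5.congr_fderiv ?_
    ext v
    simp only [ContinuousLinearMap.coe_smul', Pi.smul_apply, smul_eq_mul]
    ring


lemma my_quad_fderiv {n : ℕ} (c : ℝ) (z : EuclideanSpace ℝ (Fin (n+1))) :
    HasFDerivAt (fun w : EuclideanSpace ℝ (Fin (n+1)) =>
        c * ∑ i ∈ Finset.univ.erase (0 : Fin (n+1)), w i ^ 2)
      (c • ∑ i ∈ Finset.univ.erase (0 : Fin (n+1)),
        (2 * z i) • (EuclideanSpace.proj i : EuclideanSpace ℝ (Fin (n+1)) →L[ℝ] ℝ)) z := by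
  have h1 : ∀ i ∈ Finset.univ.erase (0 : Fin (n+1)),
      HasFDerivAt (fun w : EuclideanSpace ℝ (Fin (n+1)) =>
          (EuclideanSpace.proj i w) * (EuclideanSpace.proj i w))
        ((2 * z i) • (EuclideanSpace.proj i : EuclideanSpace ℝ (Fin (n+1)) →L[ℝ] ℝ)) z := by
    intro i _
    have hp := (EuclideanSpace.proj (𝕜 := ℝ) i).hasFDerivAt (x := z)
    have h2 := hp.fun_mul hp
    refine h2.congr_fderiv ?_
    ext v
    simp only [ContinuousLinearMap.coe_smul', Pi.smul_apply, smul_eq_mul,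
      ContinuousLinearMap.add_apply, PiLp.proj_apply]
    ring
  have h4 := (HasFDerivAt.fun_sum h1).const_mul c
  have h5 : (fun w : EuclideanSpace ℝ (Fin (n+1)) =>
      c * ∑ i ∈ Finset.univ.erase (0 : Fin (n+1)),
        (EuclideanSpace.proj i w) * (EuclideanSpace.proj i w))
      = fun w : EuclideanSpace ℝ (Fin (n+1)) =>
        c * ∑ i ∈ Finset.univ.erase (0 : Fin (n+1)), w i ^ 2 := by
    funext w
    simp only [PiLp.proj_apply, sq]
  rw [h5] at h4
  exact h4


theorem stmt_6 {n : ℕ} (c : ℝ) (hc : 0 ≤ c) (Vt : ℝ → ℝ)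
    (heven : ∀ x : ℝ, Vt (-x) = Vt x) (hC1 : ContDiff ℝ 1 Vt)
    (hconv : ConvexOn ℝ (Set.Ici (0 : ℝ)) (deriv Vt))
    (hmod : ∀ a b : ℝ, a < b → deriv Vt b - deriv Vt a ≥ 2 * deriv Vt ((b - a) / 2))
    (V : EuclideanSpace ℝ (Fin (n + 1)) → ℝ)
    (hV : V = fun x => Vt ‖x‖ + c * ∑ i ∈ Finset.univ.erase (0 : Fin (n + 1)), x i ^ 2) :
    ∀ x y : EuclideanSpace ℝ (Fin (n + 1)), x ≠ y →
      (inner ℝ (gradient V y - gradient V x) ((‖y - x‖)⁻¹ • (y - x)) : ℝ)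
        ≥ 2 * deriv Vt (‖y - x‖ / 2) := by
  intro x y hxy
  set f := deriv Vt with hfdef
  have hodd : ∀ t, f (-t) = - f t := by
    intro t
    have h1 : Vt = fun u => Vt (-u) := by funext u; rw [heven]
    have h2 : deriv Vt (-t) = deriv (fun u => Vt (-u)) (-t) := by rw [← h1]
    rw [deriv_comp_neg, neg_neg] at h2
    rw [hfdef]; linarith [h2]
  have hf0 : f 0 = 0 := by have := hodd 0; rw [neg_zero] at this; linarith
  set r := ‖y - x‖ with hrdef
  have hr : 0 < r := norm_pos_iff.mpr (sub_ne_zero.mpr (Ne.symm hxy))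
  set u : EuclideanSpace ℝ (Fin (n + 1)) := r⁻¹ • (y - x) with hu
  -- derivative of V
  have hVd : ∀ z : EuclideanSpace ℝ (Fin (n + 1)), HasFDerivAt V
      ((f ‖z‖ * ‖z‖⁻¹) • innerSL ℝ z
        + c • ∑ i ∈ Finset.univ.erase (0 : Fin (n + 1)),
            (2 * z i) • (EuclideanSpace.proj i : EuclideanSpace ℝ (Fin (n + 1)) →L[ℝ] ℝ)) z := by
    intro z
    rw [hV]
    exact (my_hasFDerivAt_norm Vt hC1 hf0 z).add (my_quad_fderiv c z)
  have hinner : ∀ z : EuclideanSpace ℝ (Fin (n + 1)), (inner ℝ (gradient V z) u : ℝ)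
      = f ‖z‖ * ‖z‖⁻¹ * (inner ℝ z u : ℝ)
        + c * ∑ i ∈ Finset.univ.erase (0 : Fin (n + 1)), 2 * z i * u i := by
    intro z
    have hg : gradient V z = (InnerProductSpace.toDual ℝ _).symm (fderiv ℝ V z) := rfl
    rw [hg, InnerProductSpace.toDual_symm_apply, (hVd z).fderiv]
    simp only [ContinuousLinearMap.add_apply, ContinuousLinearMap.coe_smul', Pi.smul_apply,
      smul_eq_mul, innerSL_apply_apply, ContinuousLinearMap.coe_sum', Finset.sum_apply,
      PiLp.proj_apply]
  set a := ‖x‖ with hadef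
  set b := ‖y‖ with hbdef
  set s : ℝ := inner ℝ x u with hsdef
  have hyx : x + (y - x) = y := by abel
  have hyu : (inner ℝ y u : ℝ) = s + r := by
    have h1 : (inner ℝ (y - x) u : ℝ) = r := by
      rw [hu, real_inner_smul_right, real_inner_self_eq_norm_sq, ← hrdef, pow_two,
        ← mul_assoc, inv_mul_cancel₀ hr.ne', one_mul]
    calc (inner ℝ y u : ℝ) = inner ℝ (x + (y - x)) u := by rw [hyx]
      _ = s + r := by rw [inner_add_left, h1, hsdef]
  have hrel : b ^ 2 = a ^ 2 + 2 * r * s + r ^ 2 := by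
    have h1 : (inner ℝ x (y - x) : ℝ) = r * s := by
      have h2 : y - x = r • u := by rw [hu, smul_smul, mul_inv_cancel₀ hr.ne', one_smul]
      rw [h2, real_inner_smul_right, hsdef]
    have h3 := norm_add_sq_real x (y - x)
    rw [hyx] at h3
    rw [hbdef, h3, h1, ← hadef, ← hrdef]
    ring
  have hnu : ‖u‖ = 1 := by
    rw [hu, norm_smul, norm_inv, norm_norm, ← hrdef]
    field_simp
  have hsa : |s| ≤ a := by
    calc |s| ≤ ‖x‖ * ‖u‖ := abs_real_inner_le_norm x u
      _ = a := by rw [hnu, mul_one, hadef]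
  have hui : ∀ i, u i = r⁻¹ * (y i - x i) := by
    intro i
    rw [hu]
    simp [PiLp.smul_apply, PiLp.sub_apply]
  have hquad : 0 ≤ c * (∑ i ∈ Finset.univ.erase (0 : Fin (n + 1)), 2 * y i * u i)
      - c * (∑ i ∈ Finset.univ.erase (0 : Fin (n + 1)), 2 * x i * u i) := by
    have h1 : c * (∑ i ∈ Finset.univ.erase (0 : Fin (n + 1)), 2 * y i * u i)
        - c * (∑ i ∈ Finset.univ.erase (0 : Fin (n + 1)), 2 * x i * u i)
        = c * ∑ i ∈ Finset.univ.erase (0 : Fin (n + 1)), 2 * r⁻¹ * (y i - x i) ^ 2 := by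
      rw [← mul_sub, ← Finset.sum_sub_distrib]
      congr 1
      apply Finset.sum_congr rfl
      intro i _
      rw [hui i]
      ring
    rw [h1]
    apply mul_nonneg hc
    apply Finset.sum_nonneg
    intro i _
    positivity
  have hkey := my_scalar_key f hf0 hodd
    (fun s t hs hst => my_slope_mono f hconv hf0 hs hst) hmod
    a b s r (norm_nonneg x) (norm_nonneg y) hr hsa hrel
  rw [inner_sub_left, hinner y, hinner x, hyu, ← hadef, ← hbdef, ← hsdef]
  rw [div_eq_mul_inv (f b) b, div_eq_mul_inv (f a) a] at hkey
  linarith [hkey, hquad]
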